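/- If R is a complete term rewrite system, then the TRS R̈ obtained by normalizing all right-hand sides, removing duplicate variants, and then deleting every rule whose left-hand side is reducible by another remaining rule, is a canonical (reduced and complete) TRS that is both normalization equivalent and conversion equivalent to R. -/

import Mathlib

namespace KB

-- Generic ARS notions
def NF {α : Type _} (r : α → α → Prop) (a : α) : Prop := ∀ b, ¬ r a b

def SymmCl {α : Type _} (r : α → α → Prop) (a b : α) : Prop := r a b ∨ r b a

def Conv {α : Type _} (r : α → α → Prop) : α → α → Prop :=
  Relation.ReflTransGen (SymmCl r)

def Joinable {α : Type _} (r : α → α → Prop) (a b : α) : Prop :=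
  ∃ c, Relation.ReflTransGen r a c ∧ Relation.ReflTransGen r b c

def Confluent {α : Type _} (r : α → α → Prop) : Prop :=
  ∀ a b c, Relation.ReflTransGen r a b → Relation.ReflTransGen r a c → Joinable r b c

def Terminating {α : Type _} (r : α → α → Prop) : Prop :=
  WellFounded (fun a b => r b a)

def Complete {α : Type _} (r : α → α → Prop) : Prop := Terminating r ∧ Confluent r

def NormTo {α : Type _} (r : α → α → Prop) (a b : α) : Prop :=
  Relation.ReflTransGen r a b ∧ NF r b

-- First-order terms
inductive Term (F V : Type) : Type where
  | var : V → Term F V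
  | app : F → List (Term F V) → Term F V

variable {F V : Type}

def Term.subst (σ : V → Term F V) : Term F V → Term F V
  | .var x => σ x
  | .app f ts => .app f (ts.attach.map fun t => Term.subst σ t.1)
decreasing_by
  simp only [Term.app.sizeOf_spec]
  have := List.sizeOf_lt_of_mem t.2
  omega

def Term.rename (π : V → V) (t : Term F V) : Term F V :=
  t.subst (fun x => Term.var (π x))

inductive Ctx (F V : Type) : Type where
  | hole : Ctx F V
  | cons : F → List (Term F V) → Ctx F V → List (Term F V) → Ctx F V

def Ctx.fill : Ctx F V → Term F V → Term F V
  | .hole, t => t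
  | .cons f l C r, t => Term.app f (l ++ C.fill t :: r)

abbrev TRS (F V : Type) := Set (Term F V × Term F V)

def Step (R : TRS F V) (s t : Term F V) : Prop :=
  ∃ (C : Ctx F V) (σ : V → Term F V) (l r : Term F V),
    (l, r) ∈ R ∧ s = C.fill (l.subst σ) ∧ t = C.fill (r.subst σ)

inductive InVars (x : V) : Term F V → Prop where
  | var : InVars x (Term.var x)
  | app {f : F} {ts : List (Term F V)} {t : Term F V} :
      t ∈ ts → InVars x t → InVars x (Term.app f ts)

def WellFormedRule (l r : Term F V) : Prop :=
  (∀ x : V, l ≠ Term.var x) ∧ ∀ x, InVars x r → InVars x l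

def IsTRS (R : TRS F V) : Prop := ∀ p ∈ R, WellFormedRule p.1 p.2

inductive Ground : Term F V → Prop where
  | app {f : F} {ts : List (Term F V)} : (∀ t ∈ ts, Ground t) → Ground (Term.app f ts)

def GroundSys (R : TRS F V) : Prop := ∀ p ∈ R, Ground p.1 ∧ Ground p.2

def LeftReduced (R : TRS F V) : Prop := ∀ p ∈ R, NF (Step (R \ {p})) p.1
def RightReduced (R : TRS F V) : Prop := ∀ p ∈ R, NF (Step R) p.2
def Reduced (R : TRS F V) : Prop := LeftReduced R ∧ RightReduced R

def RuleVariant (p q : Term F V × Term F V) : Prop :=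
  ∃ π : V → V, Function.Bijective π ∧ p.1 = q.1.rename π ∧ p.2 = q.2.rename π

def LitSim (R S : TRS F V) : Prop :=
  (∀ p ∈ R, ∃ q ∈ S, RuleVariant p q) ∧ (∀ q ∈ S, ∃ p ∈ R, RuleVariant q p)

def Encompass (s t : Term F V) : Prop :=
  ∃ (C : Ctx F V) (σ : V → Term F V), s = C.fill (t.subst σ)

def PEncompass (s t : Term F V) : Prop := Encompass s t ∧ ¬ Encompass t s

def ReductionOrder (gt : Term F V → Term F V → Prop) : Prop :=
  Transitive gt ∧ WellFounded (fun a b => gt b a) ∧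
  (∀ (C : Ctx F V) s t, gt s t → gt (C.fill s) (C.fill t)) ∧
  (∀ (σ : V → Term F V) s t, gt s t → gt (s.subst σ) (t.subst σ))

-- positions
def subt : List ℕ → Term F V → Option (Term F V)
  | [], t => some t
  | _ :: _, Term.var _ => none
  | i :: p, Term.app _ ts => (ts[i]?).bind (subt p)

def repl : List ℕ → Term F V → Term F V → Option (Term F V)
  | [], _, u => some u
  | _ :: _, Term.var _, _ => none
  | i :: p, Term.app f ts, u =>
      (ts[i]?).bind fun w => (repl p w u).map fun w' => Term.app f (ts.set i w')

def FunPos (p : List ℕ) (t : Term F V) : Prop :=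
  ∃ f ts, subt p t = some (Term.app f ts)

def Unifier (σ : V → Term F V) (s t : Term F V) : Prop := s.subst σ = t.subst σ

def IsMGU (σ : V → Term F V) (s t : Term F V) : Prop :=
  Unifier σ s t ∧ ∀ τ, Unifier τ s t → ∃ ρ, ∀ x, (σ x).subst ρ = τ x

def VarsDisjoint (p q : Term F V × Term F V) : Prop :=
  ∀ x, ¬ ((InVars x p.1 ∨ InVars x p.2) ∧ (InVars x q.1 ∨ InVars x q.2))

def Overlap (R : TRS F V) (l1 r1 : Term F V) (p : List ℕ) (l2 r2 : Term F V) : Prop :=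
  (∃ q ∈ R, RuleVariant (l1, r1) q) ∧
  (∃ q ∈ R, RuleVariant (l2, r2) q) ∧
  VarsDisjoint (l1, r1) (l2, r2) ∧
  FunPos p l2 ∧
  (∃ w, subt p l2 = some w ∧ ∃ σ, Unifier σ l1 w) ∧
  (p = [] → ¬ RuleVariant (l1, r1) (l2, r2))

def CPeak (R : TRS F V) (t : Term F V) (p : List ℕ) (s u : Term F V) : Prop :=
  ∃ (l1 r1 l2 r2 : Term F V) (σ : V → Term F V) (w : Term F V),
    Overlap R l1 r1 p l2 r2 ∧ subt p l2 = some w ∧ IsMGU σ l1 w ∧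
    s = l2.subst σ ∧ u = r2.subst σ ∧
    repl p (l2.subst σ) (r1.subst σ) = some t

def PrimeCPeak (R : TRS F V) (t : Term F V) (p : List ℕ) (s u : Term F V) : Prop :=
  CPeak R t p s u ∧
  ∀ w v, subt p s = some w → (∃ q, q ≠ [] ∧ subt q w = some v) → NF (Step R) v

def PCP (R : TRS F V) : Set (Term F V × Term F V) :=
  { e | ∃ p s, PrimeCPeak R e.1 p s e.2 }

def Nabla (R : TRS F V) (s u w : Term F V) : Prop :=
  Relation.TransGen (Step R) s u ∧ Relation.TransGen (Step R) s w ∧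
  (Joinable (Step R) u w ∨ SymmCl (Step (PCP R)) u w)

-- counted conversions and rewrite sequences
inductive ConvN {α : Type _} (r : α → α → Prop) : ℕ → ℕ → α → α → Prop where
  | refl (a : α) : ConvN r 0 0 a a
  | fwd {l n : ℕ} {a b c : α} : r a b → ConvN r l n b c → ConvN r l (n + 1) a c
  | bwd {l n : ℕ} {a b c : α} : r b a → ConvN r l n b c → ConvN r (l + 1) n a c

inductive StepsN {α : Type _} (r : α → α → Prop) : ℕ → α → α → Prop where
  | refl (a : α) : StepsN r 0 a a
  | step {n : ℕ} {a b c : α} : r a b → StepsN r n b c → StepsN r (n + 1) a c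

def RandomDescent {α : Type _} (r : α → α → Prop) : Prop :=
  ∀ l m a b, ConvN r l m a b → NF r b → ∃ n, StepsN r n a b ∧ n + l = m


theorem Term.my_ind {P : Term F V → Prop} (hv : ∀ x, P (.var x))
    (ha : ∀ f ts, (∀ t ∈ ts, P t) → P (.app f ts)) : ∀ t, P t
  | .var x => hv x
  | .app f ts => ha f ts fun t ht => Term.my_ind hv ha t
decreasing_by
  simp only [Term.app.sizeOf_spec]
  have := List.sizeOf_lt_of_mem ht
  omega

theorem Term.subst_var (σ : V → Term F V) (x : V) :
    Term.subst σ (.var x) = σ x := by rw [Term.subst]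

theorem Term.subst_app (σ : V → Term F V) (f : F) (ts : List (Term F V)) :
    Term.subst σ (.app f ts) = .app f (ts.map (Term.subst σ)) := by
  rw [Term.subst]
  congr 1
  exact List.attach_map_val (l := ts) ▸ rfl

theorem Term.subst_id (t : Term F V) : t.subst Term.var = t := by
  induction t using Term.my_ind with
  | hv x => rw [Term.subst_var]
  | ha f ts ih =>
    rw [Term.subst_app]
    congr 1
    simpa using List.map_congr_left ih

theorem Term.subst_subst (σ τ : V → Term F V) (t : Term F V) :
    (t.subst σ).subst τ = t.subst (fun x => (σ x).subst τ) := by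
  induction t using Term.my_ind with
  | hv x => simp [Term.subst_var]
  | ha f ts ih =>
    simp only [Term.subst_app, List.map_map]
    congr 1
    exact List.map_congr_left fun t ht => ih t ht
theorem Term.subst_congr {σ τ : V → Term F V} {t : Term F V}
    (h : ∀ x, InVars x t → σ x = τ x) : t.subst σ = t.subst τ := by
  induction t using Term.my_ind with
  | hv x => rw [Term.subst_var, Term.subst_var]; exact h x .var
  | ha f ts ih =>
    rw [Term.subst_app, Term.subst_app]
    congr 1
    exact List.map_congr_left fun t ht => ih t ht fun x hx => h x (.app ht hx)

def Ctx.substC (σ : V → Term F V) : Ctx F V → Ctx F V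
  | .hole => .hole
  | .cons f l C r => .cons f (l.map (Term.subst σ)) (C.substC σ) (r.map (Term.subst σ))

theorem Ctx.fill_subst (σ : V → Term F V) (C : Ctx F V) (t : Term F V) :
    (C.fill t).subst σ = (C.substC σ).fill (t.subst σ) := by
  induction C with
  | hole => rfl
  | cons f l C r ih => simp [Ctx.fill, Ctx.substC, Term.subst_app, ih]

def Ctx.comp : Ctx F V → Ctx F V → Ctx F V
  | .hole, D => D
  | .cons f l C r, D => .cons f l (C.comp D) r

theorem Ctx.fill_comp (C D : Ctx F V) (t : Term F V) :
    (C.comp D).fill t = C.fill (D.fill t) := by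
  induction C with
  | hole => rfl
  | cons f l C r ih => simp [Ctx.comp, Ctx.fill, ih]

theorem Step.fill {R : TRS F V} {s t : Term F V} (h : Step R s t) (C : Ctx F V) :
    Step R (C.fill s) (C.fill t) := by
  obtain ⟨D, σ, l, r, hm, hs, ht⟩ := h
  exact ⟨C.comp D, σ, l, r, hm, by rw [hs, Ctx.fill_comp], by rw [ht, Ctx.fill_comp]⟩

theorem Step.substitute {R : TRS F V} {s t : Term F V} (h : Step R s t) (σ : V → Term F V) :
    Step R (s.subst σ) (t.subst σ) := by
  obtain ⟨D, τ, l, r, hm, hs, ht⟩ := h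
  refine ⟨D.substC σ, fun x => (τ x).subst σ, l, r, hm, ?_, ?_⟩ <;>
    simp [hs, ht, Ctx.fill_subst, Term.subst_subst]

theorem rtg_fill {R : TRS F V} {s t : Term F V}
    (h : Relation.ReflTransGen (Step R) s t) (C : Ctx F V) :
    Relation.ReflTransGen (Step R) (C.fill s) (C.fill t) :=
  Relation.ReflTransGen.lift C.fill (fun _ _ (hab : Step R _ _) => hab.fill C) _ _ h

theorem rtg_subst {R : TRS F V} {s t : Term F V}
    (h : Relation.ReflTransGen (Step R) s t) (σ : V → Term F V) :
    Relation.ReflTransGen (Step R) (s.subst σ) (t.subst σ) :=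
  Relation.ReflTransGen.lift (Term.subst σ) (fun _ _ (hab : Step R _ _) => hab.substitute σ) _ _ h

theorem Term.rename_subst (π : V → V) (σ : V → Term F V) (t : Term F V) :
    (t.rename π).subst σ = t.subst (fun x => σ (π x)) := by
  rw [Term.rename, Term.subst_subst]
  exact Term.subst_congr fun x _ => Term.subst_var σ (π x)

theorem Term.rename_rename (π π' : V → V) (t : Term F V) :
    (t.rename π).rename π' = t.rename (fun x => π' (π x)) :=
  Term.rename_subst π _ t

theorem nf_rename {R : TRS F V} {t : Term F V} {π : V → V}
    (hnf : NF (Step R) t) (hb : Function.Bijective π) : NF (Step R) (t.rename π) := by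
  obtain ⟨π', hl, hr⟩ := Function.bijective_iff_has_inverse.1 hb
  intro u hu
  have h2 := hu.substitute (fun x => Term.var (π' x))
  have he : (t.rename π).subst (fun x => Term.var (π' x)) = t := by
    show (t.rename π).rename π' = t
    rw [Term.rename_rename]
    have : (fun x => π' (π x)) = fun x => x := funext fun x => hl x
    rw [this]
    exact Term.subst_id t
  rw [he] at h2
  exact hnf _ h2
attribute [local instance] Classical.decEq

def Term.size : Term F V → ℕ
  | .var _ => 1
  | .app _ ts => 1 + (ts.attach.map fun t => t.1.size).sum
decreasing_by
  simp only [Term.app.sizeOf_spec]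
  have := List.sizeOf_lt_of_mem t.2
  omega

theorem Term.size_var (x : V) : (Term.var x : Term F V).size = 1 := by rw [Term.size]

theorem Term.size_app (f : F) (ts : List (Term F V)) :
    (Term.app f ts).size = 1 + (ts.map Term.size).sum := by
  rw [Term.size]
  congr 1
  exact List.attach_map_val (l := ts) ▸ rfl

theorem Term.size_pos (t : Term F V) : 0 < t.size := by
  cases t with
  | var x => rw [Term.size_var]; omega
  | app f ts => rw [Term.size_app]; omega

theorem Term.size_subst_le (σ : V → Term F V) (t : Term F V) :
    t.size ≤ (t.subst σ).size := by
  induction t using Term.my_ind with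
  | hv x => rw [Term.subst_var, Term.size_var]; exact (σ x).size_pos
  | ha f ts ih =>
    rw [Term.subst_app, Term.size_app, Term.size_app, List.map_map]
    have := List.sum_le_sum ih
    exact Nat.add_le_add_left this 1

theorem sum_aux {l : List (Term F V)} {f g : Term F V → ℕ}
    (hle : ∀ a ∈ l, f a ≤ g a) (h : (l.map g).sum ≤ (l.map f).sum) :
    ∀ a ∈ l, g a ≤ f a := by
  induction l with
  | nil => simp
  | cons a l ih =>
    simp only [List.map_cons, List.sum_cons] at h
    have h1 := hle a (by simp)
    have h2 := List.sum_le_sum (fun x hx => hle x (List.mem_cons_of_mem a hx))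
    intro b hb
    rcases List.mem_cons.1 hb with rfl | hb'
    · omega
    · exact ih (fun x hx => hle x (List.mem_cons_of_mem a hx)) (by omega) b hb'

theorem Term.size_subst_eq {σ : V → Term F V} {t : Term F V}
    (h : (t.subst σ).size = t.size) : ∀ x, InVars x t → (σ x).size = 1 := by
  induction t using Term.my_ind with
  | hv x =>
    intro y hy
    cases hy
    rwa [Term.subst_var, Term.size_var] at h
  | ha f ts ih =>
    intro x hx
    cases hx with
    | app ht hxt =>
      rename_i t'
      rw [Term.subst_app, Term.size_app, Term.size_app, List.map_map] at h
      have hle : ∀ a ∈ ts, a.size ≤ (Term.size ∘ Term.subst σ) a :=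
        fun a _ => Term.size_subst_le σ a
      have hpt := sum_aux hle (by omega) t' ht
      have heq : (t'.subst σ).size = t'.size :=
        le_antisymm (by simpa using hpt) (Term.size_subst_le σ t')
      exact ih t' ht heq x hxt

theorem Ctx.size_fill_cons (f : F) (l : List (Term F V)) (C : Ctx F V)
    (r : List (Term F V)) (t : Term F V) :
    t.size < ((Ctx.cons f l C r).fill t).size := by
  induction C generalizing f l r with
  | hole =>
    rw [Ctx.fill, Term.size_app]
    have : t.size ≤ ((l ++ Ctx.fill .hole t :: r).map Term.size).sum := by
      have ht : Ctx.fill .hole t = t := rfl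
      rw [ht]
      have : t.size ∈ (l ++ t :: r).map Term.size := by simp
      exact List.le_sum_of_mem this
    omega
  | cons f' l' C' r' ih =>
    rw [Ctx.fill, Term.size_app]
    have h1 := ih f' l' r'
    have : ((Ctx.cons f' l' C' r').fill t).size
        ≤ ((l ++ (Ctx.cons f' l' C' r').fill t :: r).map Term.size).sum := by
      have : ((Ctx.cons f' l' C' r').fill t).size ∈ ((l ++ (Ctx.cons f' l' C' r').fill t :: r).map Term.size) := by simp
      exact List.le_sum_of_mem this
    omega
noncomputable def Term.vars : Term F V → Finset V
  | .var x => {x}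
  | .app _ ts => (ts.attach.map fun t => t.1.vars).foldr (· ∪ ·) ∅
decreasing_by
  simp only [Term.app.sizeOf_spec]
  have := List.sizeOf_lt_of_mem t.2
  omega

theorem mem_foldr_union {L : List (Finset V)} {x : V} :
    x ∈ L.foldr (· ∪ ·) ∅ ↔ ∃ s ∈ L, x ∈ s := by
  induction L with
  | nil => simp
  | cons a L ih => simp [ih]

theorem Term.mem_vars_app {f : F} {ts : List (Term F V)} {x : V} :
    x ∈ (Term.app f ts).vars ↔ ∃ t ∈ ts, x ∈ t.vars := by
  rw [Term.vars]
  rw [mem_foldr_union]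
  constructor
  · rintro ⟨s, hs, hx⟩
    simp only [List.mem_map, List.mem_attach, true_and, Subtype.exists] at hs
    obtain ⟨t, ht, rfl⟩ := hs
    exact ⟨t, ht, hx⟩
  · rintro ⟨t, ht, hx⟩
    refine ⟨t.vars, ?_, hx⟩
    simp only [List.mem_map, List.mem_attach, true_and, Subtype.exists]
    exact ⟨t, ht, rfl⟩

theorem Term.mem_vars_var {x y : V} : x ∈ (Term.var y : Term F V).vars ↔ x = y := by
  rw [Term.vars]; simp

theorem Term.mem_vars_iff {x : V} {t : Term F V} : x ∈ t.vars ↔ InVars x t := by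
  induction t using Term.my_ind with
  | hv y =>
    rw [Term.mem_vars_var]
    constructor
    · rintro rfl; exact .var
    · rintro h; cases h; rfl
  | ha f ts ih =>
    rw [Term.mem_vars_app]
    constructor
    · rintro ⟨t, ht, hx⟩; exact .app ht ((ih t ht).1 hx)
    · rintro h
      cases h with
      | app ht hx => rename_i t'; exact ⟨t', ht, (ih t' ht).2 hx⟩

theorem Term.mem_vars_subst {σ : V → Term F V} {t : Term F V} {x : V} :
    x ∈ (t.subst σ).vars ↔ ∃ y ∈ t.vars, x ∈ (σ y).vars := by
  induction t using Term.my_ind with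
  | hv y => rw [Term.subst_var]; simp [Term.mem_vars_var]
  | ha f ts ih =>
    rw [Term.subst_app, Term.mem_vars_app]
    constructor
    · rintro ⟨u, hu, hx⟩
      rw [List.mem_map] at hu
      obtain ⟨t', ht', rfl⟩ := hu
      obtain ⟨y, hy, hxy⟩ := (ih t' ht').1 hx
      exact ⟨y, Term.mem_vars_app.2 ⟨t', ht', hy⟩, hxy⟩
    · rintro ⟨y, hy, hxy⟩
      obtain ⟨t', ht', hy'⟩ := Term.mem_vars_app.1 hy
      exact ⟨t'.subst σ, List.mem_map.2 ⟨t', ht', rfl⟩, (ih t' ht').2 ⟨y, hy', hxy⟩⟩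

theorem Term.card_vars_le_size (t : Term F V) : t.vars.card ≤ t.size := by
  induction t using Term.my_ind with
  | hv x => rw [Term.size_var]; rw [Term.vars]; simp
  | ha f ts ih =>
    rw [Term.size_app]
    have : (Term.app f ts).vars.card ≤ ((ts.map Term.vars).foldr (· ∪ ·) ∅).card := by
      apply Finset.card_le_card
      intro x hx
      rw [mem_foldr_union]
      obtain ⟨t, ht, hxt⟩ := Term.mem_vars_app.1 hx
      exact ⟨t.vars, List.mem_map.2 ⟨t, ht, rfl⟩, hxt⟩
    have h2 : ∀ (L : List (Term F V)), (∀ t ∈ L, t.vars.card ≤ t.size) →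
        ((L.map Term.vars).foldr (· ∪ ·) ∅).card ≤ (L.map Term.size).sum := by
      intro L hL
      induction L with
      | nil => simp
      | cons a L ihL =>
        simp only [List.map_cons, List.foldr_cons, List.sum_cons]
        calc (a.vars ∪ (L.map Term.vars).foldr (· ∪ ·) ∅).card
            ≤ a.vars.card + ((L.map Term.vars).foldr (· ∪ ·) ∅).card := Finset.card_union_le _ _
          _ ≤ a.size + (L.map Term.size).sum := by
              have := ihL (fun t ht => hL t (List.mem_cons_of_mem a ht))
              have := hL a (by simp)
              omega
    have := h2 ts ih
    omega

theorem exists_bij_extend (s : Finset V) (g : V → V) (hg : Set.InjOn g ↑s) :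
    ∃ π : V → V, Function.Bijective π ∧ ∀ y ∈ s, π y = g y := by
  let f : (↑s : Set V) ↪ V := ⟨fun x => g x, fun a b h => Subtype.ext (hg a.2 b.2 h)⟩
  cases finite_or_infinite V with
  | inl h =>
    obtain ⟨e, he⟩ := Cardinal.extend_function_finite f ⟨Equiv.refl V⟩
    exact ⟨e, e.bijective, fun y hy => he ⟨y, hy⟩⟩
  | inr h =>
    have hlt : Cardinal.mk (↑s : Set V) < Cardinal.mk V := by
      have h1 : Cardinal.mk (↑s : Set V) < Cardinal.aleph0 := by
        have : Finite (↑s : Set V) := s.finite_toSet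
        exact Cardinal.lt_aleph0_of_finite _
      exact lt_of_lt_of_le h1 (Cardinal.aleph0_le_mk V)
    obtain ⟨e, he⟩ := Cardinal.extend_function_of_lt f hlt ⟨Equiv.refl V⟩
    exact ⟨e, e.bijective, fun y hy => he ⟨y, hy⟩⟩
section ARS
variable {α : Type _} {r p : α → α → Prop}

theorem eq_of_nf_rtg {a b : α} (h : Relation.ReflTransGen r a b) (ha : NF r a) : a = b := by
  rcases h.cases_head with rfl | ⟨c, hc, -⟩
  · rfl
  · exact absurd hc (ha _)

theorem exists_step_of_transGen {a b : α} (h : Relation.TransGen r a b) : ∃ c, r a c := by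
  induction h with
  | single h1 => exact ⟨_, h1⟩
  | tail _ _ ih => exact ih

theorem rtg_of_rtg_rtg (hstep : ∀ a b, p a b → Relation.ReflTransGen r a b) {a b : α}
    (h : Relation.ReflTransGen p a b) : Relation.ReflTransGen r a b := by
  induction h with
  | refl => exact .refl
  | tail _ h2 ih => exact ih.trans (hstep _ _ h2)

theorem conv_of_rtg {a b : α} (h : Relation.ReflTransGen r a b) : Conv r a b :=
  Relation.ReflTransGen.mono (p := SymmCl r) (fun _ _ (h : r _ _) => Or.inl h) _ _ h

theorem conv_symm {a b : α} (h : Conv r a b) : Conv r b a :=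
  by
  induction h with
  | refl => exact .refl
  | tail _ h2 ih => exact Relation.ReflTransGen.head (Or.symm h2) ih

theorem conv_of_convsteps (hstep : ∀ a b, p a b → Conv r a b) {a b : α}
    (h : Conv p a b) : Conv r a b := by
  induction h with
  | refl => exact .refl
  | tail _ h2 ih =>
    cases h2 with
    | inl h3 => exact ih.trans (hstep _ _ h3)
    | inr h3 => exact ih.trans (conv_symm (hstep _ _ h3))

theorem joinable_of_conv (hc : Confluent r) {a b : α} (h : Conv r a b) : Joinable r a b := by
  induction h with
  | refl => exact ⟨a, .refl, .refl⟩
  | tail _ h2 ih =>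
    obtain ⟨d, h1, h2'⟩ := ih
    rename_i b c _
    cases h2 with
    | inr h3 => exact ⟨d, h1, .head h3 h2'⟩
    | inl h3 =>
      obtain ⟨e, he1, he2⟩ := hc b d c h2' (.single h3)
      exact ⟨e, h1.trans he1, he2⟩

end ARS
theorem Term.size_eq_one {t : Term F V} (h : t.size = 1) :
    (∃ x, t = .var x) ∨ ∃ c, t = .app c [] := by
  cases t with
  | var x => exact .inl ⟨x, rfl⟩
  | app f ts =>
    right
    refine ⟨f, ?_⟩
    rw [Term.size_app] at h
    have hsum : (ts.map Term.size).sum = 0 := by omega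
    cases ts with
    | nil => rfl
    | cons a ts =>
      simp only [List.map_cons, List.sum_cons] at hsum
      have := a.size_pos
      omega

noncomputable def mu (t : Term F V) : ℕ :=
  t.size * (t.size + 1) + (t.size - t.vars.card)

theorem mu_lt_of_size_lt {a b : Term F V} (h : a.size < b.size) : mu a < mu b := by
  have ha := a.card_vars_le_size
  have hb := b.card_vars_le_size
  have h1 : mu a ≤ a.size * (a.size + 1) + a.size := by
    unfold mu; omega
  have h2 : b.size * (b.size + 1) ≤ mu b := by
    unfold mu; omega
  have h3 : (a.size + 1) * (a.size + 2) ≤ b.size * (b.size + 1) :=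
    Nat.mul_le_mul h (by omega)
  have e1 : a.size * (a.size + 1) + a.size < (a.size + 1) * (a.size + 2) := by
    ring_nf
    omega
  exact lt_of_le_of_lt h1 (lt_of_lt_of_le e1 (le_trans h3 h2))

theorem mu_lt_of_card_lt {a b : Term F V} (hs : a.size = b.size)
    (h : b.vars.card < a.vars.card) : mu a < mu b := by
  have ha := a.card_vars_le_size
  have hb := b.card_vars_le_size
  unfold mu
  have : a.size * (a.size + 1) = b.size * (b.size + 1) := by rw [hs]
  omega

theorem key_red {R dotR ddotR : TRS F V} {nf : Term F V → Term F V}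
    (hC : Complete (Step R))
    (hnf : ∀ t, Relation.ReflTransGen (Step R) t (nf t) ∧ NF (Step R) (nf t))
    (hd1 : ∀ p ∈ dotR, ∃ q ∈ R, p = (q.1, nf q.2))
    (hvf : ∀ p ∈ dotR, ∀ q ∈ dotR, RuleVariant p q → p = q)
    (hdd : ddotR = {p ∈ dotR | NF (Step (dotR \ {p})) p.1}) :
    ∀ n (l r' : Term F V), mu l ≤ n → (l, r') ∈ dotR →
      ∀ (C : Ctx F V) (σ : V → Term F V), ∃ t, Step ddotR (C.fill (l.subst σ)) t := by
  intro n
  classical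
  induction n using Nat.strong_induction_on with
  | _ n ih =>
  intro l r' hmu hmem C σ
  by_cases hin : (l, r') ∈ ddotR
  · exact ⟨C.fill (r'.subst σ), C, σ, l, r', hin, rfl, rfl⟩
  have hred : ¬ NF (Step (dotR \ {(l, r')})) l := fun hnf' => hin (hdd ▸ ⟨hmem, hnf'⟩)
  simp only [NF, not_forall, not_not] at hred
  obtain ⟨u, hu⟩ := hred
  obtain ⟨D, τ, l2, r2, hm2, hl, -⟩ := hu
  have hm2' : (l2, r2) ∈ dotR := hm2.1
  have hne : (l2, r2) ≠ (l, r') := hm2.2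
  have hmatch : ∀ m, mu l2 ≤ m → m < n → ∃ t, Step ddotR (C.fill (l.subst σ)) t := by
    intro m h1 h2
    have hLrw : l.subst σ
        = (D.substC σ).fill (l2.subst fun x => (τ x).subst σ) := by
      rw [hl, Ctx.fill_subst, Term.subst_subst]
    have := ih m h2 l2 r2 h1 hm2' (C.comp (D.substC σ)) (fun x => (τ x).subst σ)
    rwa [Ctx.fill_comp, ← hLrw] at this
  have hs2le : l2.size ≤ (l2.subst τ).size := Term.size_subst_le τ l2
  cases D with
  | cons f dl D0 dr =>
    have hlt : (l2.subst τ).size < l.size := by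
      rw [hl]; exact Ctx.size_fill_cons f dl D0 dr (l2.subst τ)
    exact hmatch (mu l2) le_rfl
      (lt_of_lt_of_le (mu_lt_of_size_lt (by omega)) hmu)
  | hole =>
    have hl2 : l = l2.subst τ := hl
    by_cases hsl : l2.size < l.size
    · exact hmatch (mu l2) le_rfl (lt_of_lt_of_le (mu_lt_of_size_lt hsl) hmu)
    have hseq : (l2.subst τ).size = l2.size := by
      rw [← hl2] at hs2le ⊢; omega
    have hsz : l2.size = l.size := by
      rw [hl2]; omega
    have hone : ∀ x, InVars x l2 → (τ x).size = 1 := Term.size_subst_eq hseq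
    set g : V → V := fun y => if h : ∃ z, τ y = Term.var z then h.choose else y with hg
    have hgvar : ∀ y, (∃ z, τ y = Term.var z) → τ y = Term.var (g y) := by
      intro y hy
      rw [hg]
      simp only [dif_pos hy]
      exact hy.choose_spec
    by_cases hconst : ∃ x ∈ l2.vars, ¬ ∃ z, τ x = Term.var z
    · -- some variable goes to a constant: variable count drops
      obtain ⟨x0, hx0, hx0c⟩ := hconst
      have himg : l.vars ⊆ (l2.vars.erase x0).image g := by
        intro z hz
        rw [hl2] at hz
        obtain ⟨y, hy, hzy⟩ := Term.mem_vars_subst.1 hz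
        have hy1 := hone y (Term.mem_vars_iff.1 hy)
        rcases Term.size_eq_one hy1 with ⟨w, hw⟩ | ⟨c, hcq⟩
        · have hzw : z = w := by rw [hw] at hzy; exact Term.mem_vars_var.1 hzy
          have hgy : g y = w := by
            have h5 := hgvar y ⟨w, hw⟩
            rw [hw] at h5
            injection h5 with h6
            exact h6.symm
          refine Finset.mem_image.2 ⟨y, Finset.mem_erase.2 ⟨?_, hy⟩, by rw [hgy, hzw]⟩
          rintro rfl
          exact hx0c ⟨w, hw⟩
        · rw [hcq] at hzy
          rcases Term.mem_vars_app.1 hzy with ⟨t, ht, -⟩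
          simp at ht
      have hcard : l.vars.card < l2.vars.card :=
        lt_of_le_of_lt ((Finset.card_le_card himg).trans Finset.card_image_le)
          (Finset.card_erase_lt_of_mem hx0)
      exact hmatch (mu l2) le_rfl
        (lt_of_lt_of_le (mu_lt_of_card_lt hsz hcard) hmu)
    · push_neg at hconst
      have hvarimg : l.vars = l2.vars.image g := by
        ext z
        constructor
        · intro hz
          rw [hl2] at hz
          obtain ⟨y, hy, hzy⟩ := Term.mem_vars_subst.1 hz
          have hvz := hgvar y (hconst y hy)
          rw [hvz] at hzy
          exact Finset.mem_image.2 ⟨y, hy, (Term.mem_vars_var.1 hzy).symm⟩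
        · intro hz
          obtain ⟨y, hy, rfl⟩ := Finset.mem_image.1 hz
          rw [hl2]
          refine Term.mem_vars_subst.2 ⟨y, hy, ?_⟩
          rw [hgvar y (hconst y hy)]
          exact Term.mem_vars_var.2 rfl
      by_cases hcard2 : l.vars.card < l2.vars.card
      · exact hmatch (mu l2) le_rfl
          (lt_of_lt_of_le (mu_lt_of_card_lt hsz hcard2) hmu)
      · -- the two rules are variants: contradiction
        exfalso
        have hcimg : (l2.vars.image g).card = l2.vars.card := by
          have h1 : (l2.vars.image g).card ≤ l2.vars.card := Finset.card_image_le
          have h2 : l.vars.card = (l2.vars.image g).card := by rw [hvarimg]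
          omega
        have hinj : Set.InjOn g ↑l2.vars := Finset.card_image_iff.1 hcimg
        obtain ⟨π, hπb, hπ⟩ := exists_bij_extend l2.vars g hinj
        have hlrn : l = l2.rename π := by
          rw [hl2, Term.rename]
          exact Term.subst_congr fun x hx => by
            rw [hgvar x (hconst x (Term.mem_vars_iff.2 hx)),
              hπ x (Term.mem_vars_iff.2 hx)]
        obtain ⟨qa, hqa, hpa⟩ := hd1 (l, r') hmem
        obtain ⟨qb, hqb, hpb⟩ := hd1 (l2, r2) hm2'
        have hla : l = qa.1 := congrArg Prod.fst hpa
        have hra : r' = nf qa.2 := congrArg Prod.snd hpa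
        have hlb : l2 = qb.1 := congrArg Prod.fst hpb
        have hrb : r2 = nf qb.2 := congrArg Prod.snd hpb
        have step_a : Step R l qa.2 := by
          refine ⟨.hole, Term.var, qa.1, qa.2, by rw [Prod.mk.eta]; exact hqa, ?_, ?_⟩
          · show l = qa.1.subst Term.var
            rw [Term.subst_id, hla]
          · show qa.2 = qa.2.subst Term.var
            rw [Term.subst_id]
        have step_b0 : Step R l2 qb.2 := by
          refine ⟨.hole, Term.var, qb.1, qb.2, by rw [Prod.mk.eta]; exact hqb, ?_, ?_⟩
          · show l2 = qb.1.subst Term.var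
            rw [Term.subst_id, hlb]
          · show qb.2 = qb.2.subst Term.var
            rw [Term.subst_id]
        have rtg1 : Relation.ReflTransGen (Step R) l r' :=
          Relation.ReflTransGen.head step_a (hra ▸ (hnf qa.2).1)
        have rtg2 : Relation.ReflTransGen (Step R) l (r2.rename π) := by
          have sb := step_b0.substitute (fun x => Term.var (π x))
          have hlsub : l2.subst (fun x => Term.var (π x)) = l := by
            rw [hlrn]; rfl
          rw [hlsub] at sb
          refine Relation.ReflTransGen.head sb ?_
          have := rtg_subst (hnf qb.2).1 (fun x => Term.var (π x))
          rw [← hrb] at this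
          exact this
        have nfa : NF (Step R) r' := hra ▸ (hnf qa.2).2
        have nfb : NF (Step R) (r2.rename π) :=
          nf_rename (hrb ▸ (hnf qb.2).2) hπb
        obtain ⟨c, hc1, hc2⟩ := hC.2 l r' (r2.rename π) rtg1 rtg2
        have e1 : r' = c := eq_of_nf_rtg hc1 nfa
        have e2 : r2.rename π = c := eq_of_nf_rtg hc2 nfb
        have hvar : RuleVariant (l, r') (l2, r2) :=
          ⟨π, hπb, hlrn, e1.trans e2.symm⟩
        exact hne (hvf _ hmem _ hm2' hvar).symm

theorem step_mono {R S : TRS F V} (hsub : R ⊆ S) {s t : Term F V}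
    (h : Step R s t) : Step S s t := by
  obtain ⟨C, σ, l, r, hm, hs, ht⟩ := h
  exact ⟨C, σ, l, r, hsub hm, hs, ht⟩


/-- Métivier's transformation: for a complete TRS R, the TRS R̈ is a canonical
TRS that is normalization and conversion equivalent to R. -/
theorem metivier_canonical {F V : Type} (R : TRS F V) (hTRS : IsTRS R)
    (hC : Complete (Step R))
    (nf : Term F V → Term F V)
    (hnf : ∀ t, Relation.ReflTransGen (Step R) t (nf t) ∧ NF (Step R) (nf t))
    (dotR : TRS F V)
    (hd1 : ∀ p ∈ dotR, ∃ q ∈ R, p = (q.1, nf q.2))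
    (hd2 : ∀ q ∈ R, ∃ p ∈ dotR, RuleVariant (q.1, nf q.2) p)
    (hvf : ∀ p ∈ dotR, ∀ q ∈ dotR, RuleVariant p q → p = q)
    (ddotR : TRS F V)
    (hdd : ddotR = {p ∈ dotR | NF (Step (dotR \ {p})) p.1}) :
    Complete (Step ddotR) ∧ Reduced ddotR ∧
    (∀ a b, NormTo (Step R) a b ↔ NormTo (Step ddotR) a b) ∧
    (∀ a b, Conv (Step R) a b ↔ Conv (Step ddotR) a b) := by
  classical
  have unique_nf : ∀ {a u : Term F V},
      Relation.ReflTransGen (Step R) a u → NF (Step R) u → u = nf a := by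
    intro a u h hu
    obtain ⟨c, h1, h2⟩ := hC.2 a u (nf a) h (hnf a).1
    rw [eq_of_nf_rtg h1 hu, eq_of_nf_rtg h2 (hnf a).2]
  have hddmem : ∀ {p : Term F V × Term F V}, p ∈ ddotR → p ∈ dotR := by
    intro p hp
    rw [hdd] at hp
    exact hp.1
  have hddsub : ∀ {s t : Term F V}, Step ddotR s t → Relation.TransGen (Step R) s t := by
    intro s t h
    obtain ⟨C, σ, l, r', hm, hs, ht⟩ := h
    obtain ⟨qa, hqa, hpa⟩ := hd1 (l, r') (hddmem hm)
    have hla : l = qa.1 := congrArg Prod.fst hpa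
    have hra : r' = nf qa.2 := congrArg Prod.snd hpa
    have st1 : Step R s (C.fill (qa.2.subst σ)) :=
      ⟨C, σ, qa.1, qa.2, by rw [Prod.mk.eta]; exact hqa, by rw [hs, hla], rfl⟩
    refine Relation.TransGen.head' st1 ?_
    rw [ht, hra]
    exact rtg_fill (rtg_subst (hnf qa.2).1 σ) C
  have hred2 : ∀ {s t : Term F V}, Step R s t → ∃ u, Step ddotR s u := by
    intro s t h
    obtain ⟨C, σ, l, r, hm, hs, ht⟩ := h
    obtain ⟨p, hp, hvp⟩ := hd2 (l, r) hm
    obtain ⟨π, hπ, h1, h2⟩ := hvp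
    have hl : l = p.1.rename π := h1
    have hform : s = C.fill (p.1.subst (fun x => σ (π x))) := by
      rw [hs, hl, Term.rename_subst]
    have := key_red hC hnf hd1 hvf hdd (mu p.1) p.1 p.2 le_rfl
      (by rw [Prod.mk.eta]; exact hp) C (fun x => σ (π x))
    rwa [← hform] at this
  have hnfiff : ∀ s, NF (Step R) s ↔ NF (Step ddotR) s := by
    intro s
    constructor
    · intro h u hu
      obtain ⟨c, hc⟩ := exists_step_of_transGen (hddsub hu)
      exact h c hc
    · intro h u hu
      obtain ⟨w, hw⟩ := hred2 hu
      exact h w hw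
  have hrtgsub : ∀ {a b : Term F V}, Relation.ReflTransGen (Step ddotR) a b →
      Relation.ReflTransGen (Step R) a b :=
    fun h => rtg_of_rtg_rtg (fun _ _ hs => (hddsub hs).to_reflTransGen) h
  have hnorm : ∀ s, Relation.ReflTransGen (Step ddotR) s (nf s) := by
    intro s
    refine ((hC.1).transGen).induction (C := fun s => Relation.ReflTransGen (Step ddotR) s (nf s)) s ?_
    intro s ihs
    by_cases h : NF (Step R) s
    · have : s = nf s := eq_of_nf_rtg (hnf s).1 h
      rw [← this]
    · simp only [NF, not_forall, not_not] at h
      obtain ⟨t, ht⟩ := h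
      obtain ⟨u, hu⟩ := hred2 ht
      have htg := hddsub hu
      have ihu := ihs u (Relation.transGen_swap.mpr htg)
      have : nf u = nf s := unique_nf (htg.to_reflTransGen.trans (hnf u).1) (hnf u).2
      rw [← this]
      exact Relation.ReflTransGen.head hu ihu
  refine ⟨⟨?_, ?_⟩, ⟨?_, ?_⟩, ?_, ?_⟩
  · -- terminating
    exact Subrelation.wf (fun h => Relation.transGen_swap.mpr (hddsub h))
      ((hC.1).transGen)
  · -- confluent
    intro a b c h1 h2
    have hba : nf b = nf a := unique_nf ((hrtgsub h1).trans (hnf b).1) (hnf b).2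
    have hca : nf c = nf a := unique_nf ((hrtgsub h2).trans (hnf c).1) (hnf c).2
    exact ⟨nf a, hba ▸ hnorm b, hca ▸ hnorm c⟩
  · -- left-reduced
    intro p hp
    rw [hdd] at hp
    intro b hb
    refine hp.2 b (step_mono ?_ hb)
    intro q hq
    exact ⟨hddmem hq.1, hq.2⟩
  · -- right-reduced
    intro p hp
    obtain ⟨q, hq, hpq⟩ := hd1 p (hddmem hp)
    rw [hpq]
    exact (hnfiff _).1 (hnf q.2).2
  · -- normalization equivalence
    intro a b
    constructor
    · rintro ⟨h1, h2⟩
      have hb : b = nf a := unique_nf h1 h2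
      subst hb
      exact ⟨hnorm a, (hnfiff _).1 (hnf a).2⟩
    · rintro ⟨h1, h2⟩
      exact ⟨hrtgsub h1, (hnfiff b).2 h2⟩
  · -- conversion equivalence
    intro a b
    constructor
    · intro h
      obtain ⟨c, hc1, hc2⟩ := joinable_of_conv hC.2 h
      have e1 : nf c = nf a := unique_nf (hc1.trans (hnf c).1) (hnf c).2
      have e2 : nf c = nf b := unique_nf (hc2.trans (hnf c).1) (hnf c).2
      have hab : nf a = nf b := e1 ▸ e2
      refine (conv_of_rtg (hnorm a)).trans ?_
      rw [hab]
      exact conv_symm (conv_of_rtg (hnorm b))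
    · intro h
      exact conv_of_convsteps
        (fun x y hxy => conv_of_rtg (hddsub hxy).to_reflTransGen) h

end KB
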